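/- Let T, X, Y be bounded linear operators on H admitting A-adjoints T♯, X♯, Y♯ respectively. Then w_A(T∘X ± Y∘T) ≤ 2√2 · max{‖X‖_A, ‖Y‖_A} · √( w_A(T)² − | ‖Re_A(T) + Im_A(T)‖_A² − ‖Re_A(T) − Im_A(T)‖_A² | / 4 ), for both choices of sign. -/

import Mathlib

noncomputable section

open Complex ContinuousLinearMap

variable {H : Type*} [NormedAddCommGroup H] [InnerProductSpace ℂ H] [CompleteSpace H]

/-- The `A`-inner product `⟨x, y⟩_A = ⟨A x, y⟩`. -/
def innA (A : H →L[ℂ] H) (x y : H) : ℂ := @inner ℂ _ _ (A x) y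

/-- The `A`-seminorm `‖x‖_A = √⟨A x, x⟩`. -/
def vnormA (A : H →L[ℂ] H) (x : H) : ℝ := Real.sqrt (innA A x x).re

/-- The `A`-operator seminorm `‖T‖_A = sup {‖T x‖_A : ‖x‖_A = 1}`. -/
def opnormA (A T : H →L[ℂ] H) : ℝ :=
  sSup {r : ℝ | ∃ x : H, vnormA A x = 1 ∧ r = vnormA A (T x)}

/-- The `A`-numerical radius `w_A(T) = sup {|⟨T x, x⟩_A| : ‖x‖_A = 1}`. -/
def wA (A T : H →L[ℂ] H) : ℝ :=
  sSup {r : ℝ | ∃ x : H, vnormA A x = 1 ∧ r = ‖innA A (T x) x‖}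

/-- The `A`-numerical range `W_A(T) = {⟨T x, x⟩_A : ‖x‖_A = 1}`. -/
def WA (A T : H →L[ℂ] H) : Set ℂ :=
  {z : ℂ | ∃ x : H, vnormA A x = 1 ∧ z = innA A (T x) x}

/-- `Re_A(T) = (T + T♯)/2`, given an `A`-adjoint `Ts` of `T`. -/
def ReA (T Ts : H →L[ℂ] H) : H →L[ℂ] H := (2 : ℂ)⁻¹ • (T + Ts)

/-- `Im_A(T) = (T - T♯)/(2i)`, given an `A`-adjoint `Ts` of `T`. -/
def ImA (T Ts : H →L[ℂ] H) : H →L[ℂ] H := (2 * Complex.I)⁻¹ • (T - Ts)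

/-- `Ts` is an `A`-adjoint of `T`, i.e. `A ∘ Ts = T* ∘ A`. -/
def IsAAdjoint (A T Ts : H →L[ℂ] H) : Prop :=
  A.comp Ts = (ContinuousLinearMap.adjoint T).comp A

/- ### Auxiliary lemmas -/

local notation "⟪" x ", " y "⟫" => @inner ℂ _ _ x y

set_option linter.unusedSectionVars false

section Aux

variable (A S : H →L[ℂ] H)

lemma aux_sym_of_selfadj {S : H →L[ℂ] H} (hSadj : ContinuousLinearMap.adjoint S = S)
    (u v : H) : ⟪S u, v⟫ = ⟪u, S v⟫ := by
  conv_lhs => rw [← hSadj]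
  exact adjoint_inner_left S v u

lemma aux_innA_eq (hS : ∀ z, A z = S (S z))
    (hsym : ∀ u v : H, ⟪S u, v⟫ = ⟪u, S v⟫) (x y : H) : innA A x y = ⟪S x, S y⟫ := by
  rw [innA, hS, hsym]

lemma aux_vnormA_eq (hS : ∀ z, A z = S (S z))
    (hsym : ∀ u v : H, ⟪S u, v⟫ = ⟪u, S v⟫) (x : H) : vnormA A x = ‖S x‖ := by
  rw [vnormA, aux_innA_eq A S hS hsym, inner_self_eq_norm_sq_to_K (𝕜 := ℂ)]
  norm_cast
  exact Real.sqrt_sq (norm_nonneg _)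

lemma aux_re_innA_self (hS : ∀ z, A z = S (S z))
    (hsym : ∀ u v : H, ⟪S u, v⟫ = ⟪u, S v⟫) (x : H) : (innA A x x).re = ‖S x‖ ^ 2 := by
  rw [aux_innA_eq A S hS hsym, inner_self_eq_norm_sq_to_K (𝕜 := ℂ)]
  norm_cast

lemma aux_innA_self (hS : ∀ z, A z = S (S z))
    (hsym : ∀ u v : H, ⟪S u, v⟫ = ⟪u, S v⟫) (x : H) :
    innA A x x = ((‖S x‖ ^ 2 : ℝ) : ℂ) := by
  rw [aux_innA_eq A S hS hsym, inner_self_eq_norm_sq_to_K (𝕜 := ℂ)]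
  norm_cast

lemma aux_abs_innA_le (hS : ∀ z, A z = S (S z))
    (hsym : ∀ u v : H, ⟪S u, v⟫ = ⟪u, S v⟫) (x y : H) :
    ‖innA A x y‖ ≤ ‖S x‖ * ‖S y‖ := by
  rw [aux_innA_eq A S hS hsym]
  exact norm_inner_le_norm _ _

lemma aux_innA_conj (hS : ∀ z, A z = S (S z))
    (hsym : ∀ u v : H, ⟪S u, v⟫ = ⟪u, S v⟫) (x y : H) :
    innA A x y = (starRingEnd ℂ) (innA A y x) := by
  rw [aux_innA_eq A S hS hsym, aux_innA_eq A S hS hsym, inner_conj_symm]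

lemma innA_add_left (x x' y : H) : innA A (x + x') y = innA A x y + innA A x' y := by
  simp [innA, inner_add_left]

lemma innA_sub_left (x x' y : H) : innA A (x - x') y = innA A x y - innA A x' y := by
  simp [innA, inner_sub_left]

lemma innA_smul_left (c : ℂ) (x y : H) :
    innA A (c • x) y = (starRingEnd ℂ) c * innA A x y := by
  simp [innA, inner_smul_left]
  ring

lemma innA_add_right (x y y' : H) : innA A x (y + y') = innA A x y + innA A x y' := by
  simp [innA, inner_add_right]

lemma innA_sub_right (x y y' : H) : innA A x (y - y') = innA A x y - innA A x y' := by
  simp [innA, inner_sub_right]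

lemma innA_smul_right (c : ℂ) (x y : H) : innA A x (c • y) = c * innA A x y := by
  simp [innA, inner_smul_right]

end Aux

section Key

variable (A S B : H →L[ℂ] H)

lemma aux_step1 (hS : ∀ z, A z = S (S z))
    (hsym : ∀ u v : H, ⟪S u, v⟫ = ⟪u, S v⟫)
    (hsB : ∀ x y, innA A (B x) y = innA A x (B y)) (x : H) :
    ‖S (B x)‖ ^ 2 ≤ ‖S (B (B x))‖ * ‖S x‖ := by
  have h1 : ‖S (B x)‖ ^ 2 = (innA A (B (B x)) x).re := by
    rw [hsB (B x) x, aux_re_innA_self A S hS hsym]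
  rw [h1]
  calc (innA A (B (B x)) x).re ≤ ‖innA A (B (B x)) x‖ := Complex.re_le_norm _
    _ ≤ ‖S (B (B x))‖ * ‖S x‖ := aux_abs_innA_le A S hS hsym _ _

lemma aux_hs_pow (hsB : ∀ x y, innA A (B x) y = innA A x (B y)) (n : ℕ) (x y : H) :
    innA A ((B ^ n) x) y = innA A x ((B ^ n) y) := by
  induction n generalizing x y with
  | zero => simp
  | succ n ih =>
    calc innA A ((B ^ (n+1)) x) y = innA A ((B ^ n) (B x)) y := by rw [pow_succ, mul_apply_eq_comp]
      _ = innA A (B x) ((B ^ n) y) := ih (B x) y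
      _ = innA A x (B ((B ^ n) y)) := hsB _ _
      _ = innA A x ((B ^ (n+1)) y) := by rw [pow_succ', mul_apply_eq_comp]

lemma aux_keyInd (hS : ∀ z, A z = S (S z))
    (hsym : ∀ u v : H, ⟪S u, v⟫ = ⟪u, S v⟫)
    (hsB : ∀ x y, innA A (B x) y = innA A x (B y)) (n : ℕ) (x : H) :
    ‖S (B x)‖ ^ (2 ^ n) * ‖S x‖ ≤ ‖S ((B ^ (2 ^ n)) x)‖ * ‖S x‖ ^ (2 ^ n) := by
  induction n with
  | zero => simp
  | succ n ih =>
    set r := ‖S (B x)‖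
    set s := ‖S x‖
    set m := 2 ^ n with hm
    set u := ‖S ((B ^ m) x)‖ with hu
    have h2m : 2 ^ (n + 1) = m * 2 := by rw [hm, pow_succ]
    rcases eq_or_lt_of_le (norm_nonneg (S x) : (0:ℝ) ≤ s) with hs | hs
    · have hs' : s = 0 := hs.symm
      rw [hs', mul_zero, zero_pow (by positivity), mul_zero]
    · have hstep : u ^ 2 ≤ ‖S ((B ^ (m * 2)) x)‖ * s := by
        have := aux_step1 A S (B ^ m) hS hsym (aux_hs_pow A B hsB m) x
        have hpow : (B ^ m) ((B ^ m) x) = (B ^ (m * 2)) x := by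
          rw [← mul_apply_eq_comp, ← pow_add, mul_two]
        rwa [hpow] at this
      rw [h2m]
      apply (mul_le_mul_iff_of_pos_right hs).mp
      have hsq : (r ^ m * s) ^ 2 ≤ (u * s ^ m) ^ 2 := by
        apply pow_le_pow_left₀ (by positivity) ih
      calc r ^ (m * 2) * s * s = (r ^ m * s) ^ 2 := by ring
        _ ≤ (u * s ^ m) ^ 2 := hsq
        _ = u ^ 2 * (s ^ m) ^ 2 := by ring
        _ ≤ (‖S ((B ^ (m * 2)) x)‖ * s) * (s ^ m) ^ 2 := by
            apply mul_le_mul_of_nonneg_right hstep (by positivity)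
        _ = ‖S ((B ^ (m * 2)) x)‖ * s ^ (m * 2) * s := by ring

lemma aux_keyBound (hS : ∀ z, A z = S (S z))
    (hsym : ∀ u v : H, ⟪S u, v⟫ = ⟪u, S v⟫)
    (hsB : ∀ x y, innA A (B x) y = innA A x (B y)) (x : H) :
    ‖S (B x)‖ ≤ ‖B‖ * ‖S x‖ := by
  by_contra hcon
  push_neg at hcon
  have hr0 : 0 < ‖S (B x)‖ := lt_of_le_of_lt (by positivity) hcon
  have hb0 : 0 < ‖B‖ := by
    rcases eq_or_lt_of_le (norm_nonneg B) with hb | hb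
    · exfalso
      have hB0 : B = 0 := by rwa [eq_comm, norm_eq_zero] at hb
      rw [hB0] at hr0
      simp at hr0
    · exact hb
  have hs0 : 0 < ‖S x‖ := by
    rcases eq_or_lt_of_le (norm_nonneg (S x)) with h0 | h0
    · exfalso
      have h1 := aux_step1 A S B hS hsym hsB x
      rw [← h0] at h1
      nlinarith
    · exact h0
  set r := ‖S (B x)‖ with hrdef
  set s := ‖S x‖ with hsdef
  set q := r / (‖B‖ * s) with hq
  have hq1 : 1 < q := (one_lt_div (by positivity)).mpr hcon
  obtain ⟨n, hn⟩ := pow_unbounded_of_one_lt (‖S‖ * ‖x‖ / s) hq1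
  have key := aux_keyInd A S B hS hsym hsB n x
  have hB : ‖S ((B ^ (2 ^ n)) x)‖ ≤ ‖S‖ * (‖B‖ ^ (2 ^ n) * ‖x‖) := by
    calc ‖S ((B ^ (2 ^ n)) x)‖ ≤ ‖S‖ * ‖(B ^ (2 ^ n)) x‖ := le_opNorm S _
      _ ≤ ‖S‖ * (‖B ^ (2 ^ n)‖ * ‖x‖) := by
          apply mul_le_mul_of_nonneg_left (le_opNorm _ _) (norm_nonneg S)
      _ ≤ ‖S‖ * (‖B‖ ^ (2 ^ n) * ‖x‖) := by
          apply mul_le_mul_of_nonneg_left _ (norm_nonneg S)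
          exact mul_le_mul_of_nonneg_right (norm_pow_le' B (by positivity)) (norm_nonneg x)
  have hqm : q ^ (2 ^ n) ≤ ‖S‖ * ‖x‖ / s := by
    rw [hq, div_pow, mul_pow, div_le_div_iff₀ (by positivity) hs0]
    calc r ^ (2 ^ n) * s ≤ ‖S ((B ^ (2 ^ n)) x)‖ * s ^ (2 ^ n) := key
      _ ≤ (‖S‖ * (‖B‖ ^ (2 ^ n) * ‖x‖)) * s ^ (2 ^ n) := by
          apply mul_le_mul_of_nonneg_right hB (by positivity)
      _ = ‖S‖ * ‖x‖ * (‖B‖ ^ (2 ^ n) * s ^ (2 ^ n)) := by ring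
  have : q ^ n ≤ q ^ (2 ^ n) := pow_le_pow_right₀ (le_of_lt hq1) (le_of_lt (Nat.lt_two_pow_self (n := n)))
  linarith

end Key

section Adj

variable (A S T Ts : H →L[ℂ] H)

lemma aux_Asym (hS : ∀ z, A z = S (S z))
    (hsym : ∀ u v : H, ⟪S u, v⟫ = ⟪u, S v⟫) (u v : H) : ⟪A u, v⟫ = ⟪u, A v⟫ := by
  rw [hS, hS, hsym, hsym]

lemma aux_shiftA (hS : ∀ z, A z = S (S z))
    (hsym : ∀ u v : H, ⟪S u, v⟫ = ⟪u, S v⟫) (hT : IsAAdjoint A T Ts) (x y : H) :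
    innA A (T x) y = innA A x (Ts y) := by
  have h1 : A (Ts y) = (ContinuousLinearMap.adjoint T) (A y) := by
    have := congrFun (congrArg DFunLike.coe hT) y
    simpa using this
  rw [innA, innA, aux_Asym A S hS hsym x (Ts y), h1, adjoint_inner_right,
    ← aux_Asym A S hS hsym (T x) y]

lemma aux_adjoint_symm (hAadj : ContinuousLinearMap.adjoint A = A)
    (hT : IsAAdjoint A T Ts) : IsAAdjoint A Ts T := by
  unfold IsAAdjoint at *
  have h := congrArg ContinuousLinearMap.adjoint hT
  rw [adjoint_comp, adjoint_comp, adjoint_adjoint, hAadj] at h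
  exact h.symm

lemma aux_abound (hAadj : ContinuousLinearMap.adjoint A = A) (hS : ∀ z, A z = S (S z))
    (hsym : ∀ u v : H, ⟪S u, v⟫ = ⟪u, S v⟫) (hT : IsAAdjoint A T Ts) (x : H) :
    ‖S (T x)‖ ≤ Real.sqrt ‖Ts.comp T‖ * ‖S x‖ := by
  have hTs : IsAAdjoint A Ts T := aux_adjoint_symm A T Ts hAadj hT
  have hsymC : ∀ u v, innA A ((Ts.comp T) u) v = innA A u ((Ts.comp T) v) := by
    intro u v
    calc innA A (Ts (T u)) v = innA A (T u) (T v) := aux_shiftA A S Ts T hS hsym hTs _ _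
      _ = innA A u (Ts (T v)) := aux_shiftA A S T Ts hS hsym hT _ _
  have key := aux_keyBound A S (Ts.comp T) hS hsym hsymC x
  have h2 : ‖S (T x)‖ ^ 2 ≤ ‖Ts.comp T‖ * ‖S x‖ ^ 2 := by
    have e1 : ‖S (T x)‖ ^ 2 = (innA A (T x) (T x)).re := by
      rw [aux_re_innA_self A S hS hsym]
    have e2 : innA A (T x) (T x) = innA A x ((Ts.comp T) x) :=
      aux_shiftA A S T Ts hS hsym hT x (T x)
    calc ‖S (T x)‖ ^ 2 = (innA A x ((Ts.comp T) x)).re := by rw [e1, e2]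
      _ ≤ ‖innA A x ((Ts.comp T) x)‖ := Complex.re_le_norm _
      _ ≤ ‖S x‖ * ‖S ((Ts.comp T) x)‖ := aux_abs_innA_le A S hS hsym _ _
      _ ≤ ‖S x‖ * (‖Ts.comp T‖ * ‖S x‖) :=
          mul_le_mul_of_nonneg_left key (norm_nonneg _)
      _ = ‖Ts.comp T‖ * ‖S x‖ ^ 2 := by ring
  calc ‖S (T x)‖ = Real.sqrt (‖S (T x)‖ ^ 2) := (Real.sqrt_sq (norm_nonneg _)).symm
    _ ≤ Real.sqrt (‖Ts.comp T‖ * ‖S x‖ ^ 2) := Real.sqrt_le_sqrt h2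
    _ = Real.sqrt ‖Ts.comp T‖ * ‖S x‖ := by
        rw [Real.sqrt_mul (norm_nonneg _), Real.sqrt_sq (norm_nonneg _)]

end Adj

section Sup

variable (A S B : H →L[ℂ] H)

lemma opnormA_nonneg : 0 ≤ opnormA A B := by
  apply Real.sSup_nonneg
  rintro r ⟨x, hx, rfl⟩
  exact Real.sqrt_nonneg _

lemma wA_nonneg : 0 ≤ wA A B := by
  apply Real.sSup_nonneg
  rintro r ⟨x, hx, rfl⟩
  exact norm_nonneg _

lemma aux_le_opnormA (hS : ∀ z, A z = S (S z))
    (hsym : ∀ u v : H, ⟪S u, v⟫ = ⟪u, S v⟫) (c : ℝ)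
    (hbd : ∀ u, ‖S (B u)‖ ≤ c * ‖S u‖) {x : H} (hx : vnormA A x = 1) :
    ‖S (B x)‖ ≤ opnormA A B := by
  apply le_csSup
  · refine ⟨c, ?_⟩
    rintro r ⟨y, hy, rfl⟩
    rw [aux_vnormA_eq A S hS hsym] at hy ⊢
    calc ‖S (B y)‖ ≤ c * ‖S y‖ := hbd y
      _ = c := by rw [hy, mul_one]
  · exact ⟨x, hx, (aux_vnormA_eq A S hS hsym _).symm⟩

lemma aux_opnormA_pointwise (hS : ∀ z, A z = S (S z))
    (hsym : ∀ u v : H, ⟪S u, v⟫ = ⟪u, S v⟫) (c : ℝ)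
    (hbd : ∀ u, ‖S (B u)‖ ≤ c * ‖S u‖) (x : H) :
    ‖S (B x)‖ ≤ opnormA A B * ‖S x‖ := by
  rcases eq_or_lt_of_le (norm_nonneg (S x)) with h0 | h0
  · have h1 : ‖S (B x)‖ ≤ 0 := by
      have := hbd x
      rw [← h0, mul_zero] at this
      exact this
    rw [← h0, mul_zero]
    exact h1
  · set t := ‖S x‖ with ht
    set u := ((t : ℂ))⁻¹ • x with hudef
    have htne : (t : ℂ) ≠ 0 := by
      simp only [ne_eq, Complex.ofReal_eq_zero]
      exact ne_of_gt h0
    have hnorm : ‖((t : ℂ))⁻¹‖ = t⁻¹ := by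
      rw [norm_inv]
      simp [abs_of_pos h0]
    have hu : vnormA A u = 1 := by
      rw [aux_vnormA_eq A S hS hsym, hudef, map_smul, norm_smul, hnorm, ← ht]
      field_simp
    have hBu : ‖S (B u)‖ ≤ opnormA A B :=
      aux_le_opnormA A S B hS hsym c hbd hu
    have hBu' : ‖S (B u)‖ = t⁻¹ * ‖S (B x)‖ := by
      rw [hudef, map_smul, map_smul, norm_smul, hnorm]
    rw [hBu'] at hBu
    calc ‖S (B x)‖ = t * (t⁻¹ * ‖S (B x)‖) := by field_simp
      _ ≤ t * opnormA A B := by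
          apply mul_le_mul_of_nonneg_left hBu (le_of_lt h0)
      _ = opnormA A B * t := mul_comm _ _

lemma aux_le_wA (hS : ∀ z, A z = S (S z))
    (hsym : ∀ u v : H, ⟪S u, v⟫ = ⟪u, S v⟫) (c : ℝ)
    (hbd : ∀ u, ‖S (B u)‖ ≤ c * ‖S u‖) {x : H} (hx : vnormA A x = 1) :
    ‖innA A (B x) x‖ ≤ wA A B := by
  apply le_csSup
  · refine ⟨c, ?_⟩
    rintro r ⟨y, hy, rfl⟩
    rw [aux_vnormA_eq A S hS hsym] at hy
    calc ‖innA A (B y) y‖ ≤ ‖S (B y)‖ * ‖S y‖ := aux_abs_innA_le A S hS hsym _ _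
      _ ≤ (c * ‖S y‖) * ‖S y‖ := mul_le_mul_of_nonneg_right (hbd y) (norm_nonneg _)
      _ = c := by rw [hy]; ring
  · exact ⟨x, hx, rfl⟩

end Sup

section Pol

variable (A S R : H →L[ℂ] H)

lemma aux_selfadj_bound (hS : ∀ z, A z = S (S z))
    (hsym : ∀ u v : H, ⟪S u, v⟫ = ⟪u, S v⟫)
    (hsR : ∀ x y, innA A (R x) y = innA A x (R y))
    (K : ℝ) (hK0 : 0 ≤ K) (hK : ∀ u, ‖innA A (R u) u‖ ≤ K * ‖S u‖ ^ 2)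
    {x : H} (hx : ‖S x‖ = 1) : ‖S (R x)‖ ≤ K := by
  rcases eq_or_lt_of_le (norm_nonneg (S (R x))) with h0 | h0
  · rw [← h0]; exact hK0
  set t := ‖S (R x)‖ with ht
  set y := ((t : ℂ))⁻¹ • R x with hy
  have hnorm : ‖((t : ℂ))⁻¹‖ = t⁻¹ := by
    rw [norm_inv]
    simp [abs_of_pos h0]
  have hSy : ‖S y‖ = 1 := by
    rw [hy, map_smul, norm_smul, hnorm, ← ht]
    field_simp
  have hv : innA A (R x) y = ((t : ℝ) : ℂ) := by
    rw [hy, innA_smul_right, aux_innA_self A S hS hsym, ← ht]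
    have : (t : ℂ) ≠ 0 := by
      simp only [ne_eq, Complex.ofReal_eq_zero]
      exact ne_of_gt h0
    push_cast
    field_simp
  have hpol : innA A (R (x + y)) (x + y) - innA A (R (x - y)) (x - y)
      = 2 * (innA A (R x) y + innA A (R y) x) := by
    rw [map_add, map_sub, innA_add_left, innA_add_right, innA_add_right,
        innA_sub_left, innA_sub_right, innA_sub_right]
    ring
  have hconj : innA A (R y) x = (starRingEnd ℂ) (innA A (R x) y) := by
    rw [hsR y x, aux_innA_conj A S hS hsym]
  have hre : (innA A (R x) y + innA A (R y) x).re = 2 * t := by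
    rw [hconj, hv]
    simp [Complex.conj_ofReal]
    ring
  have hpar : ‖S (x + y)‖ ^ 2 + ‖S (x - y)‖ ^ 2 = 4 := by
    have := parallelogram_law_with_norm ℂ (S x) (S y)
    rw [← map_add, ← map_sub] at this
    rw [hx, hSy] at this
    nlinarith [this]
  have h1 := hK (x + y)
  have h2 := hK (x - y)
  have hmain : 4 * t ≤ 4 * K := by
    have e1 : (4 : ℝ) * t = (innA A (R (x + y)) (x + y) - innA A (R (x - y)) (x - y)).re := by
      rw [hpol]
      rw [Complex.mul_re]
      simp [hre]
      ring
    have e2 : (innA A (R (x + y)) (x + y) - innA A (R (x - y)) (x - y)).re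
        ≤ ‖innA A (R (x + y)) (x + y)‖ + ‖innA A (R (x - y)) (x - y)‖ := by
      rw [Complex.sub_re]
      have a1 := Complex.re_le_norm (innA A (R (x + y)) (x + y))
      have a2 := Complex.abs_re_le_norm (innA A (R (x - y)) (x - y))
      have a3 : -(innA A (R (x - y)) (x - y)).re ≤ ‖innA A (R (x - y)) (x - y)‖ :=
        le_trans (neg_le_abs _) (Complex.abs_re_le_norm _)
      linarith
    have e3 : ‖innA A (R (x + y)) (x + y)‖ + ‖innA A (R (x - y)) (x - y)‖
        ≤ K * ‖S (x + y)‖ ^ 2 + K * ‖S (x - y)‖ ^ 2 := by linarith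
    have e4 : K * ‖S (x + y)‖ ^ 2 + K * ‖S (x - y)‖ ^ 2 = 4 * K := by
      rw [← mul_add, hpar]
      ring
    linarith
  linarith

end Pol

section PQ

lemma aux_scalarP (z : ℂ) :
    (starRingEnd ℂ) (2:ℂ)⁻¹ * (z + (starRingEnd ℂ) z)
      + (starRingEnd ℂ) (2*Complex.I)⁻¹ * (z - (starRingEnd ℂ) z)
    = ((z.re - z.im : ℝ) : ℂ) := by
  apply Complex.ext <;>
    simp [Complex.add_re, Complex.add_im, Complex.mul_re, Complex.mul_im, Complex.inv_re,
      Complex.inv_im, Complex.normSq_apply] <;> ring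

lemma aux_scalarQ (z : ℂ) :
    (starRingEnd ℂ) (2:ℂ)⁻¹ * (z + (starRingEnd ℂ) z)
      - (starRingEnd ℂ) (2*Complex.I)⁻¹ * (z - (starRingEnd ℂ) z)
    = ((z.re + z.im : ℝ) : ℂ) := by
  apply Complex.ext <;>
    simp [Complex.add_re, Complex.add_im, Complex.mul_re, Complex.mul_im, Complex.inv_re,
      Complex.inv_im, Complex.normSq_apply] <;> ring

lemma aux_abs_sub_le_sqrt2 (z : ℂ) : |z.re - z.im| ≤ Real.sqrt 2 * ‖z‖ := by
  have h : (z.re - z.im) ^ 2 ≤ (Real.sqrt 2 * ‖z‖) ^ 2 := by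
    rw [mul_pow, Real.sq_sqrt (by norm_num : (0:ℝ) ≤ 2), Complex.sq_norm, Complex.normSq_apply]
    nlinarith [sq_nonneg (z.re + z.im)]
  calc |z.re - z.im| = Real.sqrt ((z.re - z.im) ^ 2) := (Real.sqrt_sq_eq_abs _).symm
    _ ≤ Real.sqrt ((Real.sqrt 2 * ‖z‖) ^ 2) := Real.sqrt_le_sqrt h
    _ = Real.sqrt 2 * ‖z‖ := Real.sqrt_sq (by positivity)

lemma aux_abs_add_le_sqrt2 (z : ℂ) : |z.re + z.im| ≤ Real.sqrt 2 * ‖z‖ := by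
  have h : (z.re + z.im) ^ 2 ≤ (Real.sqrt 2 * ‖z‖) ^ 2 := by
    rw [mul_pow, Real.sq_sqrt (by norm_num : (0:ℝ) ≤ 2), Complex.sq_norm, Complex.normSq_apply]
    nlinarith [sq_nonneg (z.re - z.im)]
  calc |z.re + z.im| = Real.sqrt ((z.re + z.im) ^ 2) := (Real.sqrt_sq_eq_abs _).symm
    _ ≤ Real.sqrt ((Real.sqrt 2 * ‖z‖) ^ 2) := Real.sqrt_le_sqrt h
    _ = Real.sqrt 2 * ‖z‖ := Real.sqrt_sq (by positivity)

variable (A S T Ts : H →L[ℂ] H)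

lemma aux_wA_pointwise (hS : ∀ z, A z = S (S z))
    (hsym : ∀ u v : H, ⟪S u, v⟫ = ⟪u, S v⟫) (c : ℝ)
    (hbd : ∀ u, ‖S (T u)‖ ≤ c * ‖S u‖) (u : H) :
    ‖innA A (T u) u‖ ≤ wA A T * ‖S u‖ ^ 2 := by
  rcases eq_or_lt_of_le (norm_nonneg (S u)) with h0 | h0
  · calc ‖innA A (T u) u‖ ≤ ‖S (T u)‖ * ‖S u‖ := aux_abs_innA_le A S hS hsym _ _
      _ = 0 := by rw [← h0, mul_zero]
      _ ≤ wA A T * ‖S u‖ ^ 2 := by rw [← h0]; simp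
  · set t := ‖S u‖ with ht
    set u' := ((t : ℂ))⁻¹ • u with hu'
    have htne : (t : ℂ) ≠ 0 := by
      simp only [ne_eq, Complex.ofReal_eq_zero]
      exact ne_of_gt h0
    have hnorm : ‖((t : ℂ))⁻¹‖ = t⁻¹ := by
      rw [norm_inv]
      simp [abs_of_pos h0]
    have hu'1 : vnormA A u' = 1 := by
      rw [aux_vnormA_eq A S hS hsym, hu', map_smul, norm_smul, hnorm, ← ht]
      field_simp
    have hback : ((t : ℂ)) • u' = u := smul_inv_smul₀ htne u
    have hle := aux_le_wA A S T hS hsym c hbd hu'1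
    have hexp : innA A (T u) u = (starRingEnd ℂ) (t : ℂ) * ((t : ℂ) * innA A (T u') u') := by
      conv_lhs => rw [← hback]
      rw [map_smul, innA_smul_left, innA_smul_right]
    rw [hexp]
    rw [norm_mul, norm_mul, Complex.norm_conj]
    simp only [Complex.norm_real, Real.norm_eq_abs, abs_of_pos h0]
    calc t * (t * ‖innA A (T u') u'‖) ≤ t * (t * wA A T) := by
          apply mul_le_mul_of_nonneg_left _ (le_of_lt h0)
          exact mul_le_mul_of_nonneg_left hle (le_of_lt h0)
      _ = wA A T * t ^ 2 := by ring

lemma aux_Papp (x : H) : (ReA T Ts + ImA T Ts) x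
    = (2:ℂ)⁻¹ • (T x + Ts x) + (2*Complex.I)⁻¹ • (T x - Ts x) := rfl

lemma aux_Qapp (x : H) : (ReA T Ts - ImA T Ts) x
    = (2:ℂ)⁻¹ • (T x + Ts x) - (2*Complex.I)⁻¹ • (T x - Ts x) := rfl

lemma aux_innA_P_left (x y : H) : innA A ((ReA T Ts + ImA T Ts) x) y
    = (starRingEnd ℂ) (2:ℂ)⁻¹ * (innA A (T x) y + innA A (Ts x) y)
      + (starRingEnd ℂ) (2*Complex.I)⁻¹ * (innA A (T x) y - innA A (Ts x) y) := by
  rw [aux_Papp, innA_add_left, innA_smul_left, innA_smul_left, innA_add_left, innA_sub_left]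

lemma aux_innA_Q_left (x y : H) : innA A ((ReA T Ts - ImA T Ts) x) y
    = (starRingEnd ℂ) (2:ℂ)⁻¹ * (innA A (T x) y + innA A (Ts x) y)
      - (starRingEnd ℂ) (2*Complex.I)⁻¹ * (innA A (T x) y - innA A (Ts x) y) := by
  rw [aux_Qapp, innA_sub_left, innA_smul_left, innA_smul_left, innA_add_left, innA_sub_left]

lemma aux_innA_P_right (x y : H) : innA A x ((ReA T Ts + ImA T Ts) y)
    = (2:ℂ)⁻¹ * (innA A x (T y) + innA A x (Ts y))
      + (2*Complex.I)⁻¹ * (innA A x (T y) - innA A x (Ts y)) := by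
  rw [aux_Papp, innA_add_right, innA_smul_right, innA_smul_right, innA_add_right, innA_sub_right]

lemma aux_innA_Q_right (x y : H) : innA A x ((ReA T Ts - ImA T Ts) y)
    = (2:ℂ)⁻¹ * (innA A x (T y) + innA A x (Ts y))
      - (2*Complex.I)⁻¹ * (innA A x (T y) - innA A x (Ts y)) := by
  rw [aux_Qapp, innA_sub_right, innA_smul_right, innA_smul_right, innA_add_right, innA_sub_right]

lemma aux_conj_two : (starRingEnd ℂ) (2:ℂ) = 2 := by
  have : ((2:ℂ)) = ((2:ℝ):ℂ) := by norm_num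
  rw [this, Complex.conj_ofReal]

lemma aux_conj_half : (starRingEnd ℂ) (2:ℂ)⁻¹ = (2:ℂ)⁻¹ := by
  rw [map_inv₀, aux_conj_two]

lemma aux_conj_halfI : (starRingEnd ℂ) ((2:ℂ)*Complex.I)⁻¹ = -((2:ℂ)*Complex.I)⁻¹ := by
  rw [map_inv₀, map_mul, Complex.conj_I, aux_conj_two]
  rw [show ((2:ℂ) * -Complex.I) = -(2 * Complex.I) by ring, inv_neg]

lemma aux_symP (hAadj : ContinuousLinearMap.adjoint A = A) (hS : ∀ z, A z = S (S z))
    (hsym : ∀ u v : H, ⟪S u, v⟫ = ⟪u, S v⟫) (hT : IsAAdjoint A T Ts) (x y : H) :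
    innA A ((ReA T Ts + ImA T Ts) x) y = innA A x ((ReA T Ts + ImA T Ts) y) := by
  have sT := aux_shiftA A S T Ts hS hsym hT
  have sTs := aux_shiftA A S Ts T hS hsym (aux_adjoint_symm A T Ts hAadj hT)
  rw [aux_innA_P_left, aux_innA_P_right, sT x y, sTs x y, aux_conj_half, aux_conj_halfI]
  ring

lemma aux_symQ (hAadj : ContinuousLinearMap.adjoint A = A) (hS : ∀ z, A z = S (S z))
    (hsym : ∀ u v : H, ⟪S u, v⟫ = ⟪u, S v⟫) (hT : IsAAdjoint A T Ts) (x y : H) :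
    innA A ((ReA T Ts - ImA T Ts) x) y = innA A x ((ReA T Ts - ImA T Ts) y) := by
  have sT := aux_shiftA A S T Ts hS hsym hT
  have sTs := aux_shiftA A S Ts T hS hsym (aux_adjoint_symm A T Ts hAadj hT)
  rw [aux_innA_Q_left, aux_innA_Q_right, sT x y, sTs x y, aux_conj_half, aux_conj_halfI]
  ring

lemma aux_absP (hAadj : ContinuousLinearMap.adjoint A = A) (hS : ∀ z, A z = S (S z))
    (hsym : ∀ u v : H, ⟪S u, v⟫ = ⟪u, S v⟫) (hT : IsAAdjoint A T Ts) (u : H) :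
    ‖innA A ((ReA T Ts + ImA T Ts) u) u‖
      ≤ Real.sqrt 2 * ‖innA A (T u) u‖ := by
  have sTs := aux_shiftA A S Ts T hS hsym (aux_adjoint_symm A T Ts hAadj hT)
  have hw : innA A (Ts u) u = (starRingEnd ℂ) (innA A (T u) u) := by
    rw [sTs u u, aux_innA_conj A S hS hsym]
  rw [aux_innA_P_left, hw, aux_scalarP, Complex.norm_real, Real.norm_eq_abs]
  exact aux_abs_sub_le_sqrt2 _

lemma aux_absQ (hAadj : ContinuousLinearMap.adjoint A = A) (hS : ∀ z, A z = S (S z))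
    (hsym : ∀ u v : H, ⟪S u, v⟫ = ⟪u, S v⟫) (hT : IsAAdjoint A T Ts) (u : H) :
    ‖innA A ((ReA T Ts - ImA T Ts) u) u‖
      ≤ Real.sqrt 2 * ‖innA A (T u) u‖ := by
  have sTs := aux_shiftA A S Ts T hS hsym (aux_adjoint_symm A T Ts hAadj hT)
  have hw : innA A (Ts u) u = (starRingEnd ℂ) (innA A (T u) u) := by
    rw [sTs u u, aux_innA_conj A S hS hsym]
  rw [aux_innA_Q_left, hw, aux_scalarQ, Complex.norm_real, Real.norm_eq_abs]
  exact aux_abs_add_le_sqrt2 _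

end PQ

section PQsum

variable (T Ts : H →L[ℂ] H)

lemma aux_PQ_sum (x : H) :
    (ReA T Ts + ImA T Ts) x + (ReA T Ts - ImA T Ts) x = T x + Ts x := by
  rw [aux_Papp, aux_Qapp]
  match_scalars <;> field_simp <;> ring

lemma aux_PQ_diff (x : H) :
    (ReA T Ts + ImA T Ts) x - (ReA T Ts - ImA T Ts) x = (Complex.I)⁻¹ • (T x - Ts x) := by
  rw [aux_Papp, aux_Qapp]
  match_scalars <;> field_simp [Complex.I_ne_zero] <;> ring_nf <;>
    simp [Complex.I_sq] <;> ring

end PQsum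

set_option maxHeartbeats 2000000 in
theorem stmt15 (A T Ts X Xs Y Ys : H →L[ℂ] H) (hA : A.IsPositive)
    (hT : IsAAdjoint A T Ts) (hX : IsAAdjoint A X Xs) (hY : IsAAdjoint A Y Ys) :
    wA A (T.comp X + Y.comp T) ≤
        2 * Real.sqrt 2 * max (opnormA A X) (opnormA A Y) *
          Real.sqrt (wA A T ^ 2 -
            |opnormA A (ReA T Ts + ImA T Ts) ^ 2 - opnormA A (ReA T Ts - ImA T Ts) ^ 2| / 4) ∧
      wA A (T.comp X - Y.comp T) ≤
        2 * Real.sqrt 2 * max (opnormA A X) (opnormA A Y) *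
          Real.sqrt (wA A T ^ 2 -
            |opnormA A (ReA T Ts + ImA T Ts) ^ 2 - opnormA A (ReA T Ts - ImA T Ts) ^ 2| / 4) := by
  have h0 : (0 : H →L[ℂ] H) ≤ A := (ContinuousLinearMap.nonneg_iff_isPositive A).mpr hA
  set S : H →L[ℂ] H := CFC.sqrt A with hSdef
  have hmul : S * S = A := CFC.sqrt_mul_sqrt_self A h0
  have hS : ∀ z, A z = S (S z) := fun z => by rw [← hmul]; rfl
  have hSsa : IsSelfAdjoint S := IsSelfAdjoint.of_nonneg (CFC.sqrt_nonneg (a := A))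
  have hSadj : ContinuousLinearMap.adjoint S = S := by
    rw [← ContinuousLinearMap.star_eq_adjoint]; exact hSsa
  have hsym : ∀ u v : H, ⟪S u, v⟫ = ⟪u, S v⟫ := aux_sym_of_selfadj hSadj
  have hAadj : ContinuousLinearMap.adjoint A = A := by
    rw [← ContinuousLinearMap.star_eq_adjoint]; exact hA.isSelfAdjoint
  have hTbd := aux_abound A S T Ts hAadj hS hsym hT
  have hTsbd := aux_abound A S Ts T hAadj hS hsym (aux_adjoint_symm A T Ts hAadj hT)
  have hXbd := aux_abound A S X Xs hAadj hS hsym hX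
  have hYbd := aux_abound A S Y Ys hAadj hS hsym hY
  have hsP := aux_symP A S T Ts hAadj hS hsym hT
  have hsQ := aux_symQ A S T Ts hAadj hS hsym hT
  set wT := wA A T with hwT
  have hw0 : 0 ≤ wT := wA_nonneg A T
  set oP := opnormA A (ReA T Ts + ImA T Ts) with hoP
  set oQ := opnormA A (ReA T Ts - ImA T Ts) with hoQ
  set oX := opnormA A X with hoX
  set oY := opnormA A Y with hoY
  set M := max oX oY with hM
  have hM0 : 0 ≤ M := le_trans (opnormA_nonneg A X) (le_max_left _ _)
  set D := |oP ^ 2 - oQ ^ 2| with hD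
  have hKP : ∀ u, ‖innA A ((ReA T Ts + ImA T Ts) u) u‖
      ≤ (Real.sqrt 2 * wT) * ‖S u‖ ^ 2 := by
    intro u
    calc ‖innA A ((ReA T Ts + ImA T Ts) u) u‖
        ≤ Real.sqrt 2 * ‖innA A (T u) u‖ := aux_absP A S T Ts hAadj hS hsym hT u
      _ ≤ Real.sqrt 2 * (wT * ‖S u‖ ^ 2) := by
          exact mul_le_mul_of_nonneg_left
            (aux_wA_pointwise A S T hS hsym _ hTbd u) (Real.sqrt_nonneg 2)
      _ = (Real.sqrt 2 * wT) * ‖S u‖ ^ 2 := by ring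
  have hKQ : ∀ u, ‖innA A ((ReA T Ts - ImA T Ts) u) u‖
      ≤ (Real.sqrt 2 * wT) * ‖S u‖ ^ 2 := by
    intro u
    calc ‖innA A ((ReA T Ts - ImA T Ts) u) u‖
        ≤ Real.sqrt 2 * ‖innA A (T u) u‖ := aux_absQ A S T Ts hAadj hS hsym hT u
      _ ≤ Real.sqrt 2 * (wT * ‖S u‖ ^ 2) := by
          exact mul_le_mul_of_nonneg_left
            (aux_wA_pointwise A S T hS hsym _ hTbd u) (Real.sqrt_nonneg 2)
      _ = (Real.sqrt 2 * wT) * ‖S u‖ ^ 2 := by ring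
  have hoPle : oP ≤ Real.sqrt 2 * wT := by
    apply Real.sSup_le _ (mul_nonneg (Real.sqrt_nonneg 2) hw0)
    rintro r ⟨x, hx, rfl⟩
    rw [aux_vnormA_eq A S hS hsym] at hx
    rw [aux_vnormA_eq A S hS hsym]
    exact aux_selfadj_bound A S _ hS hsym hsP _
      (mul_nonneg (Real.sqrt_nonneg 2) hw0) hKP hx
  have hoQle : oQ ≤ Real.sqrt 2 * wT := by
    apply Real.sSup_le _ (mul_nonneg (Real.sqrt_nonneg 2) hw0)
    rintro r ⟨x, hx, rfl⟩
    rw [aux_vnormA_eq A S hS hsym] at hx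
    rw [aux_vnormA_eq A S hS hsym]
    exact aux_selfadj_bound A S _ hS hsym hsQ _
      (mul_nonneg (Real.sqrt_nonneg 2) hw0) hKQ hx
  have hoP0 : 0 ≤ oP := opnormA_nonneg _ _
  have hoQ0 : 0 ≤ oQ := opnormA_nonneg _ _
  have hP2 : oP ^ 2 ≤ 2 * wT ^ 2 := by
    have h := pow_le_pow_left₀ hoP0 hoPle 2
    rw [mul_pow, Real.sq_sqrt (by norm_num : (0:ℝ) ≤ 2)] at h
    linarith
  have hQ2 : oQ ^ 2 ≤ 2 * wT ^ 2 := by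
    have h := pow_le_pow_left₀ hoQ0 hoQle 2
    rw [mul_pow, Real.sq_sqrt (by norm_num : (0:ℝ) ≤ 2)] at h
    linarith
  have key : ∀ x : H, vnormA A x = 1 →
      ‖innA A (T (X x)) x‖ + ‖innA A (Y (T x)) x‖
        ≤ 2 * Real.sqrt 2 * M * Real.sqrt (wT ^ 2 - D / 4) := by
    intro x hx1
    have hx := hx1
    rw [aux_vnormA_eq A S hS hsym] at hx
    set a := ‖S (T x)‖ with ha
    set b := ‖S (Ts x)‖ with hb
    have ha0 : 0 ≤ a := norm_nonneg _
    have hb0 : 0 ≤ b := norm_nonneg _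
    have b1 : ‖innA A (T (X x)) x‖ ≤ oX * b := by
      rw [aux_shiftA A S T Ts hS hsym hT (X x) x]
      calc ‖innA A (X x) (Ts x)‖ ≤ ‖S (X x)‖ * ‖S (Ts x)‖ :=
            aux_abs_innA_le A S hS hsym _ _
        _ ≤ (oX * ‖S x‖) * b :=
            mul_le_mul_of_nonneg_right
              (aux_opnormA_pointwise A S X hS hsym _ hXbd x) hb0
        _ = oX * b := by rw [hx]; ring
    have b2 : ‖innA A (Y (T x)) x‖ ≤ oY * a := by
      calc ‖innA A (Y (T x)) x‖ ≤ ‖S (Y (T x))‖ * ‖S x‖ :=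
            aux_abs_innA_le A S hS hsym _ _
        _ = ‖S (Y (T x))‖ := by rw [hx, mul_one]
        _ ≤ oY * a := aux_opnormA_pointwise A S Y hS hsym _ hYbd (T x)
    have b3 : oX * b + oY * a ≤ M * (a + b) := by
      have h1 : oX * b ≤ M * b := mul_le_mul_of_nonneg_right (le_max_left _ _) hb0
      have h2 : oY * a ≤ M * a := mul_le_mul_of_nonneg_right (le_max_right _ _) ha0
      nlinarith [h1, h2]
    have hsum : S ((ReA T Ts + ImA T Ts) x) + S ((ReA T Ts - ImA T Ts) x)
        = S (T x) + S (Ts x) := by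
      rw [← map_add S, aux_PQ_sum T Ts x, map_add]
    have hdiffn : ‖S ((ReA T Ts + ImA T Ts) x) - S ((ReA T Ts - ImA T Ts) x)‖
        = ‖S (T x) - S (Ts x)‖ := by
      rw [← map_sub S, aux_PQ_diff T Ts x, map_smul, norm_smul, map_sub]
      have hi : ‖(Complex.I)⁻¹‖ = 1 := by rw [norm_inv, Complex.norm_I, inv_one]
      rw [hi, one_mul]
    have par1 := parallelogram_law_with_norm ℂ
      (S ((ReA T Ts + ImA T Ts) x)) (S ((ReA T Ts - ImA T Ts) x))
    have par2 := parallelogram_law_with_norm ℂ (S (T x)) (S (Ts x))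
    rw [hsum, hdiffn] at par1
    have b5 : a ^ 2 + b ^ 2
        = ‖S ((ReA T Ts + ImA T Ts) x)‖ ^ 2 + ‖S ((ReA T Ts - ImA T Ts) x)‖ ^ 2 := by
      simp only [pow_two]
      linarith [par1, par2]
    have b6P : ‖S ((ReA T Ts + ImA T Ts) x)‖ ≤ oP :=
      aux_le_opnormA A S _ hS hsym ‖ReA T Ts + ImA T Ts‖
        (aux_keyBound A S _ hS hsym hsP) hx1
    have b6Q : ‖S ((ReA T Ts - ImA T Ts) x)‖ ≤ oQ :=
      aux_le_opnormA A S _ hS hsym ‖ReA T Ts - ImA T Ts‖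
        (aux_keyBound A S _ hS hsym hsQ) hx1
    have b6 : ‖S ((ReA T Ts + ImA T Ts) x)‖ ^ 2 + ‖S ((ReA T Ts - ImA T Ts) x)‖ ^ 2
        ≤ oP ^ 2 + oQ ^ 2 :=
      add_le_add (pow_le_pow_left₀ (norm_nonneg _) b6P 2)
        (pow_le_pow_left₀ (norm_nonneg _) b6Q 2)
    have b7 : oP ^ 2 + oQ ^ 2 ≤ 4 * wT ^ 2 - D := by
      rcases abs_cases (oP ^ 2 - oQ ^ 2) with ⟨h, _⟩ | ⟨h, _⟩ <;> rw [hD, h] <;> linarith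
    have b4 : a + b ≤ Real.sqrt 2 * Real.sqrt (a ^ 2 + b ^ 2) := by
      have hsq : (a + b) ^ 2 ≤ 2 * (a ^ 2 + b ^ 2) := by nlinarith [sq_nonneg (a - b)]
      calc a + b = Real.sqrt ((a + b) ^ 2) := (Real.sqrt_sq (by linarith)).symm
        _ ≤ Real.sqrt (2 * (a ^ 2 + b ^ 2)) := Real.sqrt_le_sqrt hsq
        _ = Real.sqrt 2 * Real.sqrt (a ^ 2 + b ^ 2) :=
            Real.sqrt_mul (by norm_num) _
    have b8 : Real.sqrt (a ^ 2 + b ^ 2) ≤ Real.sqrt (4 * wT ^ 2 - D) := by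
      apply Real.sqrt_le_sqrt
      linarith
    calc ‖innA A (T (X x)) x‖ + ‖innA A (Y (T x)) x‖
        ≤ oX * b + oY * a := add_le_add b1 b2
      _ ≤ M * (a + b) := b3
      _ ≤ M * (Real.sqrt 2 * Real.sqrt (a ^ 2 + b ^ 2)) := mul_le_mul_of_nonneg_left b4 hM0
      _ ≤ M * (Real.sqrt 2 * Real.sqrt (4 * wT ^ 2 - D)) := by
          apply mul_le_mul_of_nonneg_left _ hM0
          exact mul_le_mul_of_nonneg_left b8 (Real.sqrt_nonneg 2)
      _ = 2 * Real.sqrt 2 * M * Real.sqrt (wT ^ 2 - D / 4) := by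
          have h4 : Real.sqrt (4 * wT ^ 2 - D) = 2 * Real.sqrt (wT ^ 2 - D / 4) := by
            rw [show 4 * wT ^ 2 - D = 4 * (wT ^ 2 - D / 4) by ring,
              Real.sqrt_mul (by norm_num : (0:ℝ) ≤ 4),
              show (4:ℝ) = 2 ^ 2 by norm_num,
              Real.sqrt_sq (by norm_num : (0:ℝ) ≤ 2)]
          rw [h4]
          ring
  have hRHS0 : 0 ≤ 2 * Real.sqrt 2 * M * Real.sqrt (wT ^ 2 - D / 4) :=
    mul_nonneg (mul_nonneg (mul_nonneg (by norm_num) (Real.sqrt_nonneg 2)) hM0)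
      (Real.sqrt_nonneg _)
  constructor
  · apply Real.sSup_le _ hRHS0
    rintro r ⟨x, hx, rfl⟩
    have happ : (T.comp X + Y.comp T) x = T (X x) + Y (T x) := rfl
    rw [happ, innA_add_left]
    calc ‖innA A (T (X x)) x + innA A (Y (T x)) x‖
        ≤ ‖innA A (T (X x)) x‖ + ‖innA A (Y (T x)) x‖ :=
          norm_add_le _ _
      _ ≤ _ := key x hx
  · apply Real.sSup_le _ hRHS0
    rintro r ⟨x, hx, rfl⟩
    have happ : (T.comp X - Y.comp T) x = T (X x) - Y (T x) := rfl
    rw [happ, innA_sub_left]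
    calc ‖innA A (T (X x)) x - innA A (Y (T x)) x‖
        ≤ ‖innA A (T (X x)) x‖ + ‖innA A (Y (T x)) x‖ :=
          norm_sub_le _ _
      _ ≤ _ := key x hx
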